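/- Let τ > 0 and a₀, a₁, b₀, b₁ be real numbers, and let Δ(s) = s² + a₁ s + a₀ + e^{−sτ}(b₁ s + b₀). If s₀ ∈ ℝ is a root of Δ of multiplicity at least 4 (i.e., Δ^{(k)}(s₀) = 0 for 0 ≤ k ≤ 3), then s₀ is a strictly dominant root of Δ: every complex root s ≠ s₀ of Δ satisfies Re s < s₀. -/

import Mathlib

open Complex intervalIntegral

lemma hasDerivAt_B (z : ℂ) (w : ℂ) :
    HasDerivAt (fun w : ℂ => -Complex.exp (-z*w) *
      (z^3*(w^3-2*w^2+w) + z^2*(3*w^2-4*w+1) + z*(6*w-4) + 6))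
      (z^4 * ((w^3-2*w^2+w) * Complex.exp (-z*w))) w := by
  have h1 : HasDerivAt (fun w : ℂ => -z*w) (-z) w := by
    simpa using (hasDerivAt_id w).const_mul (-z)
  have he : HasDerivAt (fun w : ℂ => Complex.exp (-z*w)) (Complex.exp (-z*w) * (-z)) w := h1.cexp
  have hp3 : HasDerivAt (fun w : ℂ => w^3-2*w^2+w) (3*w^2-4*w+1) w := by
    have := ((hasDerivAt_pow 3 w).sub ((hasDerivAt_pow 2 w).const_mul 2)).add (hasDerivAt_id w)
    refine this.congr_deriv ?_; push_cast; ring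
  have hp2 : HasDerivAt (fun w : ℂ => 3*w^2-4*w+1) (6*w-4) w := by
    have := (((hasDerivAt_pow 2 w).const_mul 3).sub ((hasDerivAt_id w).const_mul 4)).add_const 1
    refine this.congr_deriv ?_; push_cast; ring
  have hp1 : HasDerivAt (fun w : ℂ => z*(6*w-4)) (z*6) w := by
    have := (((hasDerivAt_id w).const_mul 6).sub_const 4).const_mul z
    refine this.congr_deriv ?_ <;> ring
  have hC : HasDerivAt (fun w : ℂ => z^3*(w^3-2*w^2+w) + z^2*(3*w^2-4*w+1) + z*(6*w-4) + 6)
      (z^3*(3*w^2-4*w+1) + z^2*(6*w-4) + z*6) w := by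
    exact (((hp3.const_mul (z^3)).add (hp2.const_mul (z^2))).add hp1).add_const 6
  have := he.neg.mul hC
  refine this.congr_deriv ?_
  simp only [Pi.neg_apply]
  ring

lemma integral_vanish (z : ℂ) (hz : z ≠ 0)
    (heq : z^2 - 4*z + 6 = Complex.exp (-z) * (2*z + 6)) :
    ∫ t in (0:ℝ)..1, ((t:ℂ)^3-2*(t:ℂ)^2+(t:ℂ)) * Complex.exp (-z*(t:ℂ)) = 0 := by
  have hder : ∀ t ∈ Set.uIcc (0:ℝ) 1, HasDerivAt
      (fun t : ℝ => -Complex.exp (-z*(t:ℂ)) *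
        (z^3*((t:ℂ)^3-2*(t:ℂ)^2+(t:ℂ)) + z^2*(3*(t:ℂ)^2-4*(t:ℂ)+1) + z*(6*(t:ℂ)-4) + 6))
      (z^4 * (((t:ℂ)^3-2*(t:ℂ)^2+(t:ℂ)) * Complex.exp (-z*(t:ℂ)))) t := by
    intro t _
    exact (hasDerivAt_B z (t:ℂ)).comp_ofReal
  have hcont : Continuous fun t : ℝ => z^4 * (((t:ℂ)^3-2*(t:ℂ)^2+(t:ℂ)) * Complex.exp (-z*(t:ℂ))) := by
    fun_prop
  have hFTC := intervalIntegral.integral_eq_sub_of_hasDerivAt hder (hcont.intervalIntegrable _ _)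
  rw [intervalIntegral.integral_const_mul] at hFTC
  have h4 : (z:ℂ)^4 ≠ 0 := pow_ne_zero _ hz
  have : z^4 * ∫ t in (0:ℝ)..1, ((t:ℂ)^3-2*(t:ℂ)^2+(t:ℂ)) * Complex.exp (-z*(t:ℂ)) = 0 := by
    rw [hFTC]
    simp only [Complex.ofReal_one, Complex.ofReal_zero, mul_one, mul_zero, Complex.exp_zero]
    linear_combination heq
  exact (mul_eq_zero.mp this).resolve_left h4

lemma small_case (z : ℂ) (hz : z ≠ 0) (him : |z.im| < Real.pi)
    (heq : z^2 - 4*z + 6 = Complex.exp (-z) * (2*z + 6)) : False := by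
  have hI := integral_vanish z hz heq
  have hK : ∫ t in (0:ℝ)..1, (((t:ℂ)^3-2*(t:ℂ)^2+(t:ℂ)) * Complex.exp (-z*((t:ℂ)-1/2))) = 0 := by
    have hptw : ∀ t : ℝ, (((t:ℂ)^3-2*(t:ℂ)^2+(t:ℂ)) * Complex.exp (-z*((t:ℂ)-1/2)))
        = (((t:ℂ)^3-2*(t:ℂ)^2+(t:ℂ)) * Complex.exp (-z*(t:ℂ))) * Complex.exp (z/2) := by
      intro t
      rw [mul_assoc, ← Complex.exp_add]
      congr 2
      ring
    simp only [hptw]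
    rw [intervalIntegral.integral_mul_const, hI, zero_mul]
  have hcont2 : Continuous (fun t : ℝ => ((t:ℂ)^3-2*(t:ℂ)^2+(t:ℂ)) * Complex.exp (-z*((t:ℂ)-1/2))) := by
    fun_prop
  have hre0 : ∫ t in (0:ℝ)..1,
      ((t^3-2*t^2+t) * (Real.exp (-(z.re*(t-1/2))) * Real.cos (-(z.im*(t-1/2))))) = 0 := by
    have hcc := Complex.reCLM.intervalIntegral_comp_comm (hcont2.intervalIntegrable (μ := MeasureTheory.volume) 0 1)
    rw [hK] at hcc
    have : (fun t : ℝ => (t^3-2*t^2+t) * (Real.exp (-(z.re*(t-1/2))) * Real.cos (-(z.im*(t-1/2)))))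
        = fun t : ℝ => Complex.reCLM (((t:ℂ)^3-2*(t:ℂ)^2+(t:ℂ)) * Complex.exp (-z*((t:ℂ)-1/2))) := by
      funext t
      have h1 : ((t:ℂ)^3-2*(t:ℂ)^2+(t:ℂ)) = ((t^3-2*t^2+t : ℝ) : ℂ) := by push_cast; ring
      have h2 : ((t:ℂ)-1/2) = ((t - 1/2 : ℝ) : ℂ) := by push_cast; ring
      simp only [Complex.reCLM_apply, h1, h2, Complex.re_ofReal_mul, Complex.exp_re]
      congr 2
      · simp [Complex.mul_re]
      · simp [Complex.mul_im]
    rw [this]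
    simpa using hcc
  have hpos : 0 < ∫ t in (0:ℝ)..1,
      ((t^3-2*t^2+t) * (Real.exp (-(z.re*(t-1/2))) * Real.cos (-(z.im*(t-1/2))))) := by
    apply intervalIntegral.intervalIntegral_pos_of_pos_on
    · exact Continuous.intervalIntegrable (by fun_prop) 0 1
    · intro t ht
      obtain ⟨ht0, ht1⟩ := ht
      have hg : 0 < t^3-2*t^2+t := by
        have h : t^3-2*t^2+t = t*(1-t)^2 := by ring
        rw [h]
        exact mul_pos ht0 (pow_pos (by linarith) 2)
      have habs : |(-(z.im*(t-1/2)))| < Real.pi/2 := by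
        rw [abs_neg, abs_mul]
        have h1 : |t-1/2| ≤ 1/2 := abs_le.mpr ⟨by linarith, by linarith⟩
        have h2 : 0 ≤ |z.im| := abs_nonneg _
        nlinarith [Real.pi_pos]
      have hcos : 0 < Real.cos (-(z.im*(t-1/2))) := by
        apply Real.cos_pos_of_mem_Ioo
        have := abs_lt.mp habs
        exact ⟨this.1, this.2⟩
      positivity
    · norm_num
  linarith

lemma Qpos (x w : ℝ) (hx : 0 ≤ x) (hw : 9.86 ≤ w) :
    0 < w^2+2*x*w^2-6*x^2*w+2*x^2*w^2-48*x^3-12*x^3*w+41*x^4+4*x^4*w-14*x^5+2*x^6 := by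
  nlinarith [sq_nonneg (x^3 - 3.5*x^2), sq_nonneg (55.94*x^2 - 83.16*x),
    mul_nonneg (sub_nonneg.2 hw) (sq_nonneg (2*x^2-3*x)),
    mul_nonneg (sub_nonneg.2 hw) (mul_nonneg hx hx),
    mul_nonneg (sub_nonneg.2 hw) hx,
    sq_nonneg (w-9.86), mul_nonneg hx (sq_nonneg (w-9.86)),
    mul_nonneg (mul_nonneg hx hx) (sq_nonneg (w-9.86)),
    mul_nonneg hx hx, hx, sq_nonneg x]

lemma exp_quad (x : ℝ) (hx : 0 ≤ x) : 1 + 2*x + 2*x^2 ≤ Real.exp (2*x) := by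
  have h := Real.sum_le_exp_of_nonneg (by linarith : (0:ℝ) ≤ 2*x) 3
  simp [Finset.sum_range_succ] at h
  nlinarith [h]

lemma key (z : ℂ) (hz : z ≠ 0) (hre : 0 ≤ z.re)
    (heq : z^2 - 4*z + 6 = Complex.exp (-z) * (2*z + 6)) : False := by
  rcases lt_or_ge |z.im| Real.pi with him | him
  · exact small_case z hz him heq
  · set x := z.re with hxdef
    set y := z.im with hydef
    have habs : ‖z^2-4*z+6‖ = Real.exp (-x) * ‖2*z+6‖ := by
      rw [heq, norm_mul, Complex.norm_exp]
      simp [hxdef]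
    have hsq : Complex.normSq (z^2-4*z+6) = Real.exp (-x)^2 * Complex.normSq (2*z+6) := by
      rw [← Complex.sq_norm, ← Complex.sq_norm, habs]
      ring
    have e1 : Complex.normSq (z^2-4*z+6) = (x^2-y^2-4*x+6)^2 + (2*x*y-4*y)^2 := by
      simp [Complex.normSq_apply, pow_two, Complex.mul_re, Complex.mul_im]
      ring
    have e2 : Complex.normSq (2*z+6) = (2*x+6)^2+4*y^2 := by
      simp [Complex.normSq_apply, Complex.mul_re, Complex.mul_im]
      ring
    have hone : Real.exp (-x)^2 * Real.exp (2*x) = 1 := by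
      rw [pow_two, ← Real.exp_add, ← Real.exp_add, show -x + -x + 2*x = 0 by ring, Real.exp_zero]
    rw [e1, e2] at hsq
    have hNN : ((x^2-y^2-4*x+6)^2 + (2*x*y-4*y)^2) * Real.exp (2*x) = (2*x+6)^2+4*y^2 := by
      rw [hsq]
      linear_combination ((2*x+6)^2+4*y^2) * hone
    have hw : 9.86 ≤ y^2 := by
      nlinarith [Real.pi_gt_d6, him, _root_.sq_abs y, abs_nonneg y]
    have hQ := Qpos x (y^2) hre hw
    have hexp2 := exp_quad x hre
    have hN1 : (0:ℝ) ≤ (x^2-y^2-4*x+6)^2 + (2*x*y-4*y)^2 := by positivity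
    nlinarith [mul_le_mul_of_nonneg_left hexp2 hN1, hNN, hQ]

noncomputable def Gfun' (τ A B C D E : ℂ) : ℂ → ℂ :=
  fun w => A*w^2 + B*w + C + Complex.exp (-w*τ) * (D*w + E)

lemma Gfun'_hasDerivAt (τ A B C D E w : ℂ) :
    HasDerivAt (Gfun' τ A B C D E) (Gfun' τ 0 (2*A) B (-τ*D) (D - τ*E) w) w := by
  have h1 : HasDerivAt (fun w : ℂ => -w*τ) (-τ) w := by
    simpa using ((hasDerivAt_id w).neg.mul_const τ)
  have he : HasDerivAt (fun w : ℂ => Complex.exp (-w*τ)) (Complex.exp (-w*τ) * (-τ)) w := h1.cexp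
  have hp : HasDerivAt (fun w : ℂ => D*w + E) D w := by
    simpa using ((hasDerivAt_id w).const_mul D).add_const E
  have hq : HasDerivAt (fun w : ℂ => A*w^2 + B*w + C) (2*A*w + B) w := by
    have := (((hasDerivAt_pow 2 w).const_mul A).add ((hasDerivAt_id w).const_mul B)).add_const C
    refine this.congr_deriv ?_
    push_cast
    ring
  have := hq.add (he.mul hp)
  refine this.congr_deriv ?_
  simp only [Gfun']
  ring

lemma Gfun'_deriv (τ A B C D E : ℂ) :
    deriv (Gfun' τ A B C D E) = Gfun' τ 0 (2*A) B (-τ*D) (D - τ*E) :=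
  funext fun w => (Gfun'_hasDerivAt τ A B C D E w).deriv

/-- MID property for `n = 2`, `m = 1`: if `s₀ ∈ ℝ` is a root of multiplicity at
least `4` of `Δ(s) = s² + a₁ s + a₀ + e^{-sτ}(b₁ s + b₀)` with `τ > 0`, then
`s₀` is strictly dominant: every complex root `s ≠ s₀` satisfies `Re s < s₀`. -/
theorem mid_strict_dominancy_n2_m1 (τ a₀ a₁ b₀ b₁ : ℝ) (hτ : 0 < τ) (s₀ : ℝ)
    (hmult : ∀ k ≤ 3,
      iteratedDeriv k
        (fun s : ℂ => s ^ 2 + (a₁ : ℂ) * s + (a₀ : ℂ) +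
          Complex.exp (-s * τ) * ((b₁ : ℂ) * s + (b₀ : ℂ))) (s₀ : ℂ) = 0) :
    ∀ s : ℂ, s ^ 2 + (a₁ : ℂ) * s + (a₀ : ℂ) +
        Complex.exp (-s * τ) * ((b₁ : ℂ) * s + (b₀ : ℂ)) = 0 →
      s ≠ (s₀ : ℂ) → s.re < s₀ := by
  have hτc : (τ:ℂ) ≠ 0 := Complex.ofReal_ne_zero.mpr hτ.ne'
  have hfg : (fun s : ℂ => s ^ 2 + (a₁ : ℂ) * s + (a₀ : ℂ) +
      Complex.exp (-s * τ) * ((b₁ : ℂ) * s + (b₀ : ℂ)))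
      = Gfun' ↑τ 1 ↑a₁ ↑a₀ ↑b₁ ↑b₀ := by
    funext w
    simp only [Gfun']
    ring
  have h0 := hmult 0 (by norm_num)
  rw [hfg, iteratedDeriv_zero] at h0
  have h1 := hmult 1 (by norm_num)
  rw [hfg, iteratedDeriv_one, Gfun'_deriv] at h1
  have h2 := hmult 2 (by norm_num)
  rw [hfg, show (2:ℕ) = 1+1 from rfl, iteratedDeriv_succ', Gfun'_deriv,
    iteratedDeriv_one, Gfun'_deriv] at h2
  have h3 := hmult 3 (by norm_num)
  rw [hfg, show (3:ℕ) = 1+1+1 from rfl, iteratedDeriv_succ', Gfun'_deriv,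
    iteratedDeriv_succ', Gfun'_deriv, iteratedDeriv_one, Gfun'_deriv] at h3
  simp only [Gfun'] at h0 h1 h2 h3
  have H3 : (τ:ℂ)^2*(Complex.exp (-↑s₀*↑τ)*↑b₁) + 2*↑τ = 0 := by
    linear_combination (τ:ℂ)*h2 + h3
  have H4 : (τ:ℂ)^2*(Complex.exp (-↑s₀*↑τ)*(↑b₁*↑s₀+↑b₀)) + 6 = 0 := by
    apply mul_left_cancel₀ hτc
    rw [mul_zero]
    linear_combination -h3 + 3*H3
  have H1 : (τ:ℂ)*↑a₁ + 2*↑τ*↑s₀ + 4 = 0 := by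
    apply mul_left_cancel₀ hτc
    rw [mul_zero]
    linear_combination (τ:ℂ)^2*h1 - H3 + (τ:ℂ)*H4
  have H2 : (τ:ℂ)^2*((↑s₀:ℂ)^2 + ↑a₁*↑s₀ + ↑a₀) - 6 = 0 := by
    linear_combination (τ:ℂ)^2*h0 - H4
  intro s hs hne
  by_contra hcon
  push_neg at hcon
  have hexp : Complex.exp (-s*↑τ)
      = Complex.exp (-↑s₀*↑τ) * Complex.exp (-((s - ↑s₀) * ↑τ)) := by
    rw [← Complex.exp_add]
    congr 1
    ring
  rw [hexp] at hs
  refine key ((s - ↑s₀) * ↑τ) (mul_ne_zero (sub_ne_zero.mpr hne) hτc) ?_ ?_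
  · have : ((s - ↑s₀) * ↑τ).re = (s.re - s₀) * τ := by
      simp [Complex.mul_re]
    rw [this]
    exact mul_nonneg (by linarith) hτ.le
  · linear_combination (τ:ℂ)^2*hs - (s - ↑s₀)*↑τ*H1 - H2
      - Complex.exp (-((s - ↑s₀) * ↑τ))*(s - ↑s₀)*H3 - Complex.exp (-((s - ↑s₀) * ↑τ))*H4
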